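/- Let F be a field of characteristic p, α ∈ F, β ∈ F×, and let K = F[x : x^p - x = α]. For any f ∈ K with N_{K/F}(f) ≠ 0, one has [α,β)_{p,F} ≅ [α, N_{K/F}(f)·β)_{p,F}. -/

import Mathlib

set_option linter.unusedSectionVars false
set_option maxHeartbeats 1000000


open scoped TensorProduct

/-- The defining relations of the symbol `p`-algebra
`[a,b)_{p,F} = F⟨x,y : x^p - x = a, y^p = b, yx - xy = y⟩`. -/
inductive SymbolRel (F : Type) [Field F] (p : ℕ) (a b : F) :
    FreeAlgebra F (Fin 2) → FreeAlgebra F (Fin 2) → Prop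
  | x : SymbolRel F p a b (FreeAlgebra.ι F 0 ^ p - FreeAlgebra.ι F 0) (algebraMap F _ a)
  | y : SymbolRel F p a b (FreeAlgebra.ι F 1 ^ p) (algebraMap F _ b)
  | comm : SymbolRel F p a b
      (FreeAlgebra.ι F 1 * FreeAlgebra.ι F 0 - FreeAlgebra.ι F 0 * FreeAlgebra.ι F 1)
      (FreeAlgebra.ι F 1)

/-- The symbol `p`-algebra `[a,b)_{p,F}`. -/
abbrev SymbolAlg (F : Type) [Field F] (p : ℕ) (a b : F) : Type :=
  RingQuot (SymbolRel F p a b)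

namespace SymP

open Polynomial AdjoinRoot

noncomputable section

variable (p : ℕ) (F : Type) [Field F] [Fact p.Prime] [CharP F p] (α : F)

/-- The Artin–Schreier polynomial. -/
abbrev qq : F[X] := X ^ p - X - Polynomial.C α

lemma pPrime : p.Prime := Fact.out

lemma qq_monic : (qq p F α).Monic := by
  have h1 : ((X : F[X]) + C α).degree < (p : ℕ) := by
    rw [degree_X_add_C]
    exact_mod_cast (pPrime p).one_lt
  have := monic_X_pow_sub (p := (X + C α : F[X])) (n := p) h1
  simpa [sub_sub] using this

lemma qq_degree : (qq p F α).degree = p := by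
  have h1 : ((X : F[X]) + C α).degree < ((X : F[X]) ^ p).degree := by
    rw [degree_X_pow, degree_X_add_C]
    exact_mod_cast (pPrime p).one_lt
  rw [qq, sub_sub, degree_sub_eq_left_of_degree_lt h1, degree_X_pow]

lemma qq_natDegree : (qq p F α).natDegree = p :=
  natDegree_eq_of_degree_eq_some (qq_degree p F α)

lemma qq_comp_add_one : (qq p F α).comp (X + 1) = qq p F α := by
  simp only [qq, sub_comp, pow_comp, X_comp, C_comp]
  rw [add_pow_char]
  ring

lemma qq_comp_sub_one : (qq p F α).comp (X - 1) = qq p F α := by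
  simp only [qq, sub_comp, pow_comp, X_comp, C_comp]
  rw [sub_pow_char]
  ring

/-- An algebra endomorphism of `AdjoinRoot (qq p F α)` induced by a polynomial
substitution fixing `qq`. -/
def sigHom (s : F[X]) (hs : (qq p F α).comp s = qq p F α) :
    AdjoinRoot (qq p F α) →ₐ[F] AdjoinRoot (qq p F α) :=
  liftAlgHom _ (Algebra.ofId F _) (mk _ s) (by
    have h : aeval (mk (qq p F α) s) (qq p F α) = 0 := by
      rw [← aeval_eq, ← aeval_comp, hs, aeval_eq, mk_self]
    exact h)

lemma sigHom_mk (s : F[X]) (hs : (qq p F α).comp s = qq p F α) (r : F[X]) :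
    sigHom p F α s hs (mk _ r) = mk _ (r.comp s) := by
  show aeval (mk (qq p F α) s) r = _
  rw [← aeval_eq, ← aeval_comp, aeval_eq]

/-- The automorphism `x ↦ x + 1` of `AdjoinRoot (qq p F α)`. -/
def sig : AdjoinRoot (qq p F α) ≃ₐ[F] AdjoinRoot (qq p F α) :=
  AlgEquiv.ofAlgHom (sigHom p F α (X + 1) (qq_comp_add_one p F α))
    (sigHom p F α (X - 1) (qq_comp_sub_one p F α))
    (by
      refine algHom_ext ?_
      have : root (qq p F α) = mk _ X := mk_X.symm
      simp only [AlgHom.coe_comp, Function.comp_apply, AlgHom.coe_id, id_eq, this,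
        sigHom_mk, X_comp, sub_comp, one_comp]
      congr 1
      ring)
    (by
      refine algHom_ext ?_
      have : root (qq p F α) = mk _ X := mk_X.symm
      simp only [AlgHom.coe_comp, Function.comp_apply, AlgHom.coe_id, id_eq, this,
        sigHom_mk, X_comp, sub_comp, add_comp, one_comp]
      congr 1
      ring)

lemma sig_mk (r : F[X]) : sig p F α (mk _ r) = mk _ (r.comp (X + 1)) :=
  sigHom_mk p F α (X + 1) (qq_comp_add_one p F α) r

lemma sig_root : sig p F α (root _) = root _ + 1 := by
  rw [← mk_X, sig_mk, X_comp, map_add, mk_X, map_one]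

lemma sig_pow_root (n : ℕ) :
    ((sig p F α) ^ n) (root _) = root _ + (n : AdjoinRoot (qq p F α)) := by
  induction n with
  | zero => simp
  | succ n ih =>
    rw [pow_succ', AlgEquiv.mul_apply, ih, map_add, sig_root, map_natCast]
    push_cast
    ring

lemma sig_pow_p (z : AdjoinRoot (qq p F α)) : ((sig p F α) ^ p) z = z := by
  have h : ((((sig p F α) ^ p : _ ≃ₐ[F] _) : AdjoinRoot (qq p F α) →ₐ[F] _)) =
      AlgHom.id F _ := by
    refine algHom_ext ?_
    show ((sig p F α) ^ p) (root _) = _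
    rw [sig_pow_root]
    have h0 : ((p : ℕ) : AdjoinRoot (qq p F α)) = 0 := by
      rw [← map_natCast (algebraMap F _), CharP.cast_eq_zero, map_zero]
    simp [h0]
  simpa using DFunLike.congr_fun h z

/-- The "norm product" `∏ σ^i z`. -/
def cprod (z : AdjoinRoot (qq p F α)) : AdjoinRoot (qq p F α) :=
  ∏ i ∈ Finset.range p, ((sig p F α) ^ i) z

lemma sig_apply_pow (z : AdjoinRoot (qq p F α)) (i : ℕ) :
    sig p F α (((sig p F α) ^ i) z) = ((sig p F α) ^ (i + 1)) z := by
  rw [pow_succ', AlgEquiv.mul_apply]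

lemma sig_cprod (z : AdjoinRoot (qq p F α)) :
    sig p F α (cprod p F α z) = cprod p F α z := by
  obtain ⟨m, hm⟩ : ∃ m, p = m + 1 := ⟨p - 1, by have := (pPrime p).pos; omega⟩
  rw [cprod, map_prod]
  simp_rw [sig_apply_pow]
  rw [show Finset.range p = Finset.range (m + 1) from by rw [hm],
    Finset.prod_range_succ, Finset.prod_range_succ', ← hm, sig_pow_p, pow_zero,
    AlgEquiv.one_apply, mul_comm]

/-- A polynomial of degree `< p` fixed by `X ↦ X + 1` is constant. -/
lemma natDegree_eq_zero_of_comp_fixed {r : F[X]} (hd : r.natDegree < p)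
    (h : r.comp (X + 1) = r) : r.natDegree = 0 := by
  by_contra hne
  obtain ⟨m, hm⟩ : ∃ m, r.natDegree = m + 1 := ⟨r.natDegree - 1, by omega⟩
  have hr0 : r ≠ 0 := fun h0 => hne (by simp [h0])
  have hcomp : r.comp (X + 1) =
      ∑ k ∈ Finset.range (m + 2), Polynomial.C (r.coeff k) * (X + 1) ^ k := by
    conv_lhs => rw [r.as_sum_range' (m + 2) (by omega)]
    rw [Polynomial.comp, eval₂_finset_sum]
    refine Finset.sum_congr rfl fun k _ => ?_
    rw [eval₂_monomial]
  have hco : (r.comp (X + 1)).coeff m =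
      r.coeff m + r.coeff (m + 1) * ((m + 1 : ℕ) : F) := by
    rw [hcomp, finset_sum_coeff]
    simp_rw [coeff_C_mul, coeff_X_add_one_pow]
    rw [Finset.sum_range_succ, Finset.sum_range_succ]
    rw [Finset.sum_eq_zero (fun k hk => by
      rw [Nat.choose_eq_zero_of_lt (Finset.mem_range.mp hk)]
      simp)]
    rw [Nat.choose_self, Nat.choose_succ_self_right]
    simp
  rw [h] at hco
  have hz : r.coeff (m + 1) * ((m + 1 : ℕ) : F) = 0 := left_eq_add.mp hco
  have hm1 : ((m + 1 : ℕ) : F) ≠ 0 := by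
    rw [Ne, CharP.cast_eq_zero_iff F p]
    intro hdvd
    have := Nat.le_of_dvd (by omega) hdvd
    omega
  have hlead : r.coeff (m + 1) ≠ 0 := by
    rw [← hm]
    exact mt leadingCoeff_eq_zero.mp hr0
  exact hlead ((mul_eq_zero.mp hz).resolve_right hm1)

lemma fixed_mem (z : AdjoinRoot (qq p F α)) (hz : sig p F α z = z) :
    ∃ t : F, z = algebraMap F _ t := by
  obtain ⟨r0, rfl⟩ := mk_surjective z
  obtain ⟨r, hr⟩ : ∃ r, r = r0 %ₘ qq p F α := ⟨_, rfl⟩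
  have hdiv : r + qq p F α * (r0 /ₘ qq p F α) = r0 := by
    rw [hr]; exact modByMonic_add_div r0 (qq p F α)
  have hmk : mk (qq p F α) r = mk _ r0 := by
    rw [mk_eq_mk]
    exact ⟨-(r0 /ₘ qq p F α), by linear_combination hdiv⟩
  have hdeg : r.degree < (qq p F α).degree := by
    rw [hr]; exact degree_modByMonic_lt r0 (qq_monic p F α)
  rcases eq_or_ne r 0 with hr0 | hr0
  · exact ⟨0, by rw [← hmk, hr0, map_zero, map_zero]⟩
  have hfix : r.comp (X + 1) = r := by
    have h2 : mk (qq p F α) (r.comp (X + 1)) = mk _ r := by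
      rw [← sig_mk, hmk, hz]
    rw [mk_eq_mk] at h2
    by_contra hne
    have hsub : r.comp (X + 1) - r ≠ 0 := sub_ne_zero.mpr hne
    have hcd : (r.comp (X + 1)).degree ≤ r.degree := by
      calc (r.comp (X + 1)).degree ≤ ((r.comp (X + 1)).natDegree : WithBot ℕ) :=
            degree_le_natDegree
        _ ≤ ((r.natDegree * (X + 1 : F[X]).natDegree : ℕ) : WithBot ℕ) :=
            Nat.cast_le.mpr natDegree_comp_le
        _ = (r.natDegree : WithBot ℕ) := by
            rw [show ((X : F[X]) + 1) = X + C 1 by simp, natDegree_X_add_C, mul_one]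
        _ = r.degree := (degree_eq_natDegree hr0).symm
    have hlt : (r.comp (X + 1) - r).degree < (qq p F α).degree :=
      lt_of_le_of_lt (degree_sub_le _ _) (max_lt (lt_of_le_of_lt hcd hdeg) hdeg)
    exact hsub (eq_zero_of_dvd_of_degree_lt h2 hlt)
  have hnd : r.natDegree < p := by
    have := natDegree_lt_natDegree hr0 hdeg
    rwa [qq_natDegree] at this
  have h0 : r.natDegree = 0 := natDegree_eq_zero_of_comp_fixed p F hnd hfix
  refine ⟨r.coeff 0, ?_⟩
  rw [← hmk]
  conv_lhs => rw [eq_C_of_natDegree_eq_zero h0]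
  rw [mk_C, AdjoinRoot.algebraMap_eq]

lemma finrank_eq : Module.finrank F (AdjoinRoot (qq p F α)) = p := by
  rw [PowerBasis.finrank (powerBasis' (qq_monic p F α)), powerBasis'_dim, qq_natDegree]

lemma cprod_eq_norm (z : AdjoinRoot (qq p F α)) :
    cprod p F α z = algebraMap F _ (Algebra.norm F z) := by
  obtain ⟨t, ht⟩ := fixed_mem p F α _ (sig_cprod p F α z)
  have h1 : Algebra.norm F (cprod p F α z) = t ^ p := by
    rw [ht, Algebra.norm_algebraMap, finrank_eq]
  have h2 : Algebra.norm F (cprod p F α z) = (Algebra.norm F z) ^ p := by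
    rw [cprod, map_prod,
      Finset.prod_congr rfl fun i _ => Algebra.norm_eq_of_algEquiv ((sig p F α) ^ i) z,
      Finset.prod_const, Finset.card_range]
  have ht' : t = Algebra.norm F z := by
    apply frobenius_inj F p
    rw [frobenius_def, frobenius_def, ← h1, h2]
  rw [ht, ht']

/-! ### The symbol algebra side -/

variable (b : F)

/-- The generator `x` of the symbol algebra. -/
def Xg : SymbolAlg F p α b := RingQuot.mkAlgHom F (SymbolRel F p α b) (FreeAlgebra.ι F 0)

/-- The generator `y` of the symbol algebra. -/
def Yg : SymbolAlg F p α b := RingQuot.mkAlgHom F (SymbolRel F p α b) (FreeAlgebra.ι F 1)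

lemma relX : Xg p F α b ^ p - Xg p F α b = algebraMap F _ α := by
  have h := RingQuot.mkAlgHom_rel F (SymbolRel.x (F := F) (p := p) (a := α) (b := b))
  rw [map_sub, map_pow, AlgHom.commutes] at h
  exact h

lemma relY : Yg p F α b ^ p = algebraMap F _ b := by
  have h := RingQuot.mkAlgHom_rel F (SymbolRel.y (F := F) (p := p) (a := α) (b := b))
  rw [map_pow, AlgHom.commutes] at h
  exact h

lemma relYX : Yg p F α b * Xg p F α b - Xg p F α b * Yg p F α b = Yg p F α b := by
  have h := RingQuot.mkAlgHom_rel F (SymbolRel.comm (F := F) (p := p) (a := α) (b := b))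
  rw [map_sub, map_mul, map_mul] at h
  exact h

lemma YX_eq : Yg p F α b * Xg p F α b = (Xg p F α b + 1) * Yg p F α b := by
  have h := relYX p F α b
  rw [sub_eq_iff_eq_add] at h
  rw [h, add_mul, one_mul, add_comm]

/-- Evaluation of `K = AdjoinRoot (qq p F α)` inside the symbol algebra, sending the
root to `Xg`. -/
def ev : AdjoinRoot (qq p F α) →ₐ[F] SymbolAlg F p α b :=
  Ideal.Quotient.liftₐ (Ideal.span {qq p F α}) (Polynomial.aeval (Xg p F α b)) (by
    intro a ha
    obtain ⟨c, rfl⟩ := (Ideal.mem_span_singleton).mp ha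
    rw [map_mul]
    have hq : (Polynomial.aeval (Xg p F α b)) (qq p F α) = 0 := by
      rw [qq, map_sub, map_sub, map_pow, aeval_X, aeval_C, sub_eq_zero, relX]
    rw [hq, zero_mul])

lemma ev_mk (r : F[X]) : ev p F α b (mk _ r) = aeval (Xg p F α b) r := rfl

lemma ev_root : ev p F α b (root _) = Xg p F α b := by
  rw [← mk_X, ev_mk, aeval_X]

lemma comp_aeval (r : F[X]) :
    aeval (Xg p F α b + 1) r = aeval (Xg p F α b) (r.comp (X + 1)) := by
  induction r using Polynomial.induction_on with
  | C a => simp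
  | add u v hu hv => rw [add_comp, map_add, map_add, hu, hv]
  | monomial n a ih =>
    have h1 : aeval (Xg p F α b + 1) (C a * X ^ (n + 1)) =
        aeval (Xg p F α b + 1) (C a * X ^ n) * (Xg p F α b + 1) := by
      rw [pow_succ, ← mul_assoc, map_mul, aeval_X]
    have h2 : aeval (Xg p F α b) ((C a * X ^ (n + 1)).comp (X + 1)) =
        aeval (Xg p F α b) ((C a * X ^ n).comp (X + 1)) * (Xg p F α b + 1) := by
      rw [pow_succ, ← mul_assoc, mul_comp, X_comp, map_mul, map_add, aeval_X, map_one]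
    rw [h1, h2, ih]

lemma Y_aeval (r : F[X]) :
    Yg p F α b * aeval (Xg p F α b) r = aeval (Xg p F α b + 1) r * Yg p F α b := by
  induction r using Polynomial.induction_on with
  | C a =>
    rw [aeval_C, aeval_C]
    exact (Algebra.commutes a (Yg p F α b)).symm
  | add u v hu hv => rw [map_add, map_add, mul_add, add_mul, hu, hv]
  | monomial n a ih =>
    have h1 : aeval (Xg p F α b) (C a * X ^ (n + 1)) =
        aeval (Xg p F α b) (C a * X ^ n) * Xg p F α b := by
      rw [pow_succ, ← mul_assoc, map_mul, aeval_X]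
    have h2 : aeval (Xg p F α b + 1) (C a * X ^ (n + 1)) =
        aeval (Xg p F α b + 1) (C a * X ^ n) * (Xg p F α b + 1) := by
      rw [pow_succ, ← mul_assoc, map_mul, aeval_X]
    rw [h1, h2]
    calc Yg p F α b * (aeval (Xg p F α b) (C a * X ^ n) * Xg p F α b)
        = Yg p F α b * aeval (Xg p F α b) (C a * X ^ n) * Xg p F α b := by
          rw [mul_assoc]
      _ = aeval (Xg p F α b + 1) (C a * X ^ n) * Yg p F α b * Xg p F α b := by rw [ih]
      _ = aeval (Xg p F α b + 1) (C a * X ^ n) * (Yg p F α b * Xg p F α b) := by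
          rw [mul_assoc]
      _ = aeval (Xg p F α b + 1) (C a * X ^ n) * ((Xg p F α b + 1) * Yg p F α b) := by
          rw [YX_eq]
      _ = aeval (Xg p F α b + 1) (C a * X ^ n) * (Xg p F α b + 1) * Yg p F α b := by
          rw [mul_assoc]

lemma Y_ev (z : AdjoinRoot (qq p F α)) :
    Yg p F α b * ev p F α b z = ev p F α b (sig p F α z) * Yg p F α b := by
  obtain ⟨r, rfl⟩ := mk_surjective z
  rw [ev_mk, Y_aeval, sig_mk, ev_mk, ← comp_aeval]

lemma X_ev (z : AdjoinRoot (qq p F α)) :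
    Xg p F α b * ev p F α b z = ev p F α b z * Xg p F α b := by
  rw [← ev_root, ← map_mul, ← map_mul, mul_comm]

lemma evY_pow (z : AdjoinRoot (qq p F α)) (n : ℕ) :
    (ev p F α b z * Yg p F α b) ^ n =
      ev p F α b (∏ i ∈ Finset.range n, ((sig p F α) ^ i) z) * Yg p F α b ^ n := by
  induction n with
  | zero => simp
  | succ n ih =>
    rw [pow_succ', ih]
    calc ev p F α b z * Yg p F α b *
          (ev p F α b (∏ i ∈ Finset.range n, ((sig p F α) ^ i) z) * Yg p F α b ^ n)
        = ev p F α b z *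
            (Yg p F α b * ev p F α b (∏ i ∈ Finset.range n, ((sig p F α) ^ i) z)) *
            Yg p F α b ^ n := by
          rw [mul_assoc, mul_assoc, mul_assoc]
      _ = ev p F α b z *
            (ev p F α b (sig p F α (∏ i ∈ Finset.range n, ((sig p F α) ^ i) z)) *
              Yg p F α b) * Yg p F α b ^ n := by
          rw [Y_ev]
      _ = ev p F α b (z * sig p F α (∏ i ∈ Finset.range n, ((sig p F α) ^ i) z)) *
            (Yg p F α b * Yg p F α b ^ n) := by
          rw [map_mul]
          rw [mul_assoc, mul_assoc, mul_assoc]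
      _ = ev p F α b (∏ i ∈ Finset.range (n + 1), ((sig p F α) ^ i) z) *
            Yg p F α b ^ (n + 1) := by
          rw [← pow_succ']
          congr 1
          rw [map_prod]
          simp_rw [sig_apply_pow]
          rw [Finset.prod_range_succ', pow_zero, AlgEquiv.one_apply, mul_comm]

lemma evY_pow_p (z : AdjoinRoot (qq p F α)) :
    (ev p F α b z * Yg p F α b) ^ p = algebraMap F _ (Algebra.norm F z * b) := by
  rw [evY_pow, ← cprod, cprod_eq_norm, relY, AlgHom.commutes, ← map_mul]

/-- The algebra homomorphism `[α,b')_{p,F} → [α,b)_{p,F}` sending `x ↦ x` and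
`y ↦ z(x)·y`, when `N(z)·b = b'`. -/
def mkHom (b' : F) (z : AdjoinRoot (qq p F α)) (hz : Algebra.norm F z * b = b') :
    SymbolAlg F p α b' →ₐ[F] SymbolAlg F p α b :=
  RingQuot.liftAlgHom F ⟨FreeAlgebra.lift F
      ![Xg p F α b, ev p F α b z * Yg p F α b], by
    rintro x y h
    cases h with
    | x =>
      rw [map_sub, map_pow, AlgHom.commutes, FreeAlgebra.lift_ι_apply,
        Matrix.cons_val_zero, relX]
    | y =>
      rw [map_pow, AlgHom.commutes, FreeAlgebra.lift_ι_apply, Matrix.cons_val_one,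
        Matrix.cons_val_zero, evY_pow_p, hz]
    | comm =>
      rw [map_sub, map_mul, map_mul, FreeAlgebra.lift_ι_apply, FreeAlgebra.lift_ι_apply,
        Matrix.cons_val_zero, Matrix.cons_val_one, Matrix.cons_val_zero]
      calc ev p F α b z * Yg p F α b * Xg p F α b -
            Xg p F α b * (ev p F α b z * Yg p F α b)
          = ev p F α b z * (Yg p F α b * Xg p F α b) -
              ev p F α b z * (Xg p F α b * Yg p F α b) := by
            rw [mul_assoc, ← mul_assoc (Xg p F α b), X_ev, mul_assoc]
        _ = ev p F α b z * (Yg p F α b * Xg p F α b - Xg p F α b * Yg p F α b) :=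
            (mul_sub _ _ _).symm
        _ = ev p F α b z * Yg p F α b := by rw [relYX]⟩

lemma mkHom_X (b' : F) (z : AdjoinRoot (qq p F α)) (hz : Algebra.norm F z * b = b') :
    mkHom p F α b b' z hz (Xg p F α b') = Xg p F α b := by
  show RingQuot.liftAlgHom F _ (RingQuot.mkAlgHom F _ (FreeAlgebra.ι F 0)) = _
  rw [RingQuot.liftAlgHom_mkAlgHom_apply, FreeAlgebra.lift_ι_apply, Matrix.cons_val_zero]

lemma mkHom_Y (b' : F) (z : AdjoinRoot (qq p F α)) (hz : Algebra.norm F z * b = b') :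
    mkHom p F α b b' z hz (Yg p F α b') = ev p F α b z * Yg p F α b := by
  show RingQuot.liftAlgHom F _ (RingQuot.mkAlgHom F _ (FreeAlgebra.ι F 1)) = _
  rw [RingQuot.liftAlgHom_mkAlgHom_apply, FreeAlgebra.lift_ι_apply, Matrix.cons_val_one,
    Matrix.cons_val_zero]

lemma mkHom_ev (b' : F) (z : AdjoinRoot (qq p F α)) (hz : Algebra.norm F z * b = b')
    (w : AdjoinRoot (qq p F α)) :
    mkHom p F α b b' z hz (ev p F α b' w) = ev p F α b w := by
  obtain ⟨r, rfl⟩ := mk_surjective w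
  rw [ev_mk, ev_mk, ← aeval_algHom_apply, mkHom_X]

end

end SymP

/-- For `K = F[x : x^p - x = α]` and `f ∈ K` with `N_{K/F}(f) ≠ 0`,
`[α,β)_{p,F} ≅ [α, N_{K/F}(f)·β)_{p,F}`. -/
theorem symbol_mul_norm_right (p : ℕ) (hp : p.Prime) (F : Type) [Field F] [CharP F p]
    (α β : F) (hβ : β ≠ 0)
    (f : AdjoinRoot (Polynomial.X ^ p - Polynomial.X - Polynomial.C α))
    (hf : Algebra.norm F f ≠ 0) :
    Nonempty (SymbolAlg F p α β ≃ₐ[F] SymbolAlg F p α (Algebra.norm F f * β)) := by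
  haveI := Fact.mk hp
  obtain ⟨m, hm⟩ : ∃ m, p = m + 1 := ⟨p - 1, by have := hp.pos; omega⟩
  set D := ∏ i ∈ Finset.range m, ((SymP.sig p F α) ^ (i + 1)) f with hD
  have hfD : D * f = algebraMap F _ (Algebra.norm F f) := by
    rw [← SymP.cprod_eq_norm p F α f, SymP.cprod,
      show Finset.range p = Finset.range (m + 1) from by rw [hm], Finset.prod_range_succ',
      pow_zero, AlgEquiv.one_apply, hD]
  set g := (Algebra.norm F f)⁻¹ • D with hg
  have hfg : f * g = 1 := by
    rw [hg, Algebra.mul_smul_comm, mul_comm f D, hfD, Algebra.smul_def, ← map_mul,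
      inv_mul_cancel₀ hf, map_one]
  have hgf : g * f = 1 := by rw [mul_comm]; exact hfg
  have hNfg : Algebra.norm F f * Algebra.norm F g = 1 := by
    rw [← map_mul, hfg, map_one]
  have hNg : Algebra.norm F g * (Algebra.norm F f * β) = β := by
    calc Algebra.norm F g * (Algebra.norm F f * β)
        = Algebra.norm F f * Algebra.norm F g * β := by ring
      _ = β := by rw [hNfg, one_mul]
  refine ⟨AlgEquiv.ofAlgHom
    (SymP.mkHom p F α (Algebra.norm F f * β) β g hNg)
    (SymP.mkHom p F α β (Algebra.norm F f * β) f rfl) ?_ ?_⟩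
  · refine RingQuot.ringQuot_ext' F _ _ (FreeAlgebra.hom_ext (funext fun i => ?_))
    fin_cases i
    · show (SymP.mkHom p F α (Algebra.norm F f * β) β g hNg)
          ((SymP.mkHom p F α β (Algebra.norm F f * β) f rfl) (SymP.Xg p F α (Algebra.norm F f * β))) =
        SymP.Xg p F α (Algebra.norm F f * β)
      rw [SymP.mkHom_X, SymP.mkHom_X]
    · show (SymP.mkHom p F α (Algebra.norm F f * β) β g hNg)
          ((SymP.mkHom p F α β (Algebra.norm F f * β) f rfl) (SymP.Yg p F α (Algebra.norm F f * β))) =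
        SymP.Yg p F α (Algebra.norm F f * β)
      rw [SymP.mkHom_Y, map_mul, SymP.mkHom_ev, SymP.mkHom_Y, ← mul_assoc, ← map_mul,
        hfg, map_one, one_mul]
  · refine RingQuot.ringQuot_ext' F _ _ (FreeAlgebra.hom_ext (funext fun i => ?_))
    fin_cases i
    · show (SymP.mkHom p F α β (Algebra.norm F f * β) f rfl)
          ((SymP.mkHom p F α (Algebra.norm F f * β) β g hNg) (SymP.Xg p F α β)) =
        SymP.Xg p F α β
      rw [SymP.mkHom_X, SymP.mkHom_X]
    · show (SymP.mkHom p F α β (Algebra.norm F f * β) f rfl)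
          ((SymP.mkHom p F α (Algebra.norm F f * β) β g hNg) (SymP.Yg p F α β)) =
        SymP.Yg p F α β
      rw [SymP.mkHom_Y, map_mul, SymP.mkHom_ev, SymP.mkHom_Y, ← mul_assoc, ← map_mul,
        hgf, map_one, one_mul]
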